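/- arXiv:1802.07991 — 3 statements merged into one kernel-verified Lean document; each statement's English description precedes it below -/
import Mathlib

section
/- Let T be a finite tree with an even number of vertices. Then the set of edges e of T such that T − e consists of two components each of odd order forms an odd factor of T, i.e., every vertex of T is incident with an odd number of such edges. -/
open Finset
open scoped Classical

/-- A multigraph on vertex type `V` with edge index type `E`: each edge `e` has two
distinct endpoints given as an unordered pair `ends e` (no loops, multiple edges allowed). -/
structure Multigraph (V : Type) (E : Type) where
  ends : E → Sym2 V
  no_loops : ∀ e, ¬ (ends e).IsDiag

namespace Multigraph

variable {V E : Type} [Fintype V] [Fintype E]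

/-- The number of edges from the edge set `F` incident with `v`. -/
noncomputable def degIn (G : Multigraph V E) (F : Finset E) (v : V) : ℕ :=
  (F.filter (fun e => v ∈ G.ends e)).card

/-- The degree of `v` in `G`. -/
noncomputable def deg (G : Multigraph V E) (v : V) : ℕ := G.degIn Finset.univ v

/-- The underlying simple graph of `G`. -/
def simple (G : Multigraph V E) : SimpleGraph V where
  Adj x y := x ≠ y ∧ ∃ e : E, G.ends e = s(x, y)
  symm := by
    constructor
    rintro x y ⟨hxy, e, he⟩
    exact ⟨hxy.symm, e, by rw [he, Sym2.eq_swap]⟩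
  loopless := ⟨fun x h => h.1 rfl⟩

/-- `C` is the vertex set of a connected component of the subgraph of `G` induced by `S`. -/
def IsComponentOf (G : Multigraph V E) (S : Set V) (C : Finset V) : Prop :=
  ∃ v ∈ S, ∀ x : V, x ∈ C ↔
    Relation.ReflTransGen (fun a b => a ∈ S ∧ b ∈ S ∧ (G.simple).Adj a b) v x

/-- The number of edges of `G` with one endpoint in `U₁` and the other in `U₂`. -/
noncomputable def eBetween (G : Multigraph V E) (U₁ U₂ : Finset V) : ℕ :=
  (Finset.univ.filter (fun e : E => ∃ x ∈ U₁, ∃ y ∈ U₂, G.ends e = s(x, y))).card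

/-- The set of vertices of `G` of odd degree. -/
noncomputable def oddVerts (G : Multigraph V E) : Finset V :=
  Finset.univ.filter (fun v => Odd (G.deg v))

/-- The set of vertices of `G` of even degree. -/
noncomputable def evenVerts (G : Multigraph V E) : Finset V :=
  Finset.univ.filter (fun v => Even (G.deg v))

/-- `F` forms an odd subgraph: every vertex incident with an edge of `F` has odd `F`-degree. -/
def IsOddSet (G : Multigraph V E) (F : Finset E) : Prop :=
  ∀ v : V, (∃ e ∈ F, v ∈ G.ends e) → Odd (G.degIn F v)

/-- `F` forms an even subgraph: every vertex has even `F`-degree. -/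
def IsEvenSet (G : Multigraph V E) (F : Finset E) : Prop :=
  ∀ v : V, Even (G.degIn F v)

end Multigraph

open Multigraph


section TreeAux

open SimpleGraph

variable {V : Type} [Fintype V] {T : SimpleGraph V}

private lemma not_reach_del (hacyc : T.IsAcyclic) {v w : V} (h : T.Adj v w) :
    ¬ (T.deleteEdges {s(v, w)}).Reachable v w :=
  (SimpleGraph.isBridge_iff.mp (SimpleGraph.isAcyclic_iff_forall_adj_isBridge.mp hacyc h))

private lemma exists_nbr (hconn : T.Connected) (hacyc : T.IsAcyclic) {v x : V} (hx : x ≠ v) :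
    ∃ w, T.Adj v w ∧ (T.deleteEdges {s(v, w)}).Reachable w x := by
  obtain ⟨q⟩ := hconn v x
  obtain ⟨p, hp⟩ := q.toPath
  obtain ⟨w, h, r, rfl⟩ := SimpleGraph.Walk.exists_eq_cons_of_ne (Ne.symm hx) p
  rw [SimpleGraph.Walk.cons_isPath_iff] at hp
  refine ⟨w, h, ⟨r.toDeleteEdges {s(v, w)} ?_⟩⟩
  intro e he hes
  rw [Set.mem_singleton_iff] at hes
  subst hes
  exact hp.2 (r.fst_mem_support_of_mem_edges he)

private lemma nbr_unique (hacyc : T.IsAcyclic) {v w w' x : V}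
    (hw : T.Adj v w) (hw' : T.Adj v w')
    (hr : (T.deleteEdges {s(v, w)}).Reachable w x)
    (hr' : (T.deleteEdges {s(v, w')}).Reachable w' x) : w = w' := by
  have mk : ∀ (u : V) (hu : T.Adj v u), (T.deleteEdges {s(v, u)}).Reachable u x →
      ∃ P : T.Path v x, P.1.getVert 1 = u := by
    intro u hu ⟨r⟩
    obtain ⟨p, hp⟩ := r.toPath
    have hsub : ∀ e ∈ p.edges, e ∈ T.edgeSet := fun e he =>
      SimpleGraph.edgeSet_subset_edgeSet.mpr (SimpleGraph.deleteEdges_le _) (p.edges_subset_edgeSet he)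
    have hvp : v ∉ p.support := by
      intro hv
      exact not_reach_del hacyc hu (SimpleGraph.Reachable.symm ⟨p.takeUntil v hv⟩)
    have hq : (p.transfer T hsub).IsPath := hp.transfer hsub
    have hvq : v ∉ (p.transfer T hsub).support := by
      rwa [SimpleGraph.Walk.support_transfer]
    refine ⟨⟨SimpleGraph.Walk.cons hu (p.transfer T hsub),
      (SimpleGraph.Walk.cons_isPath_iff _ _).mpr ⟨hq, hvq⟩⟩, ?_⟩
    rw [SimpleGraph.Walk.getVert_cons_succ, SimpleGraph.Walk.getVert_zero]
  obtain ⟨P1, hP1⟩ := mk w hw hr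
  obtain ⟨P2, hP2⟩ := mk w' hw' hr'
  rw [hacyc.path_unique P1 P2] at hP1
  rw [← hP1, ← hP2]

private lemma reach_cover (hconn : T.Connected) (hacyc : T.IsAcyclic) {v w : V}
    (h : T.Adj v w) (x : V) :
    (T.deleteEdges {s(v, w)}).Reachable v x ∨ (T.deleteEdges {s(v, w)}).Reachable w x := by
  obtain ⟨q⟩ := hconn v x
  obtain ⟨p, hp⟩ := q.toPath
  by_cases hw : w ∈ p.support
  · right
    have hv : v ∉ (p.dropUntil w hw).support := by
      intro hvmem
      have hnd : p.support.Nodup := hp.support_nodup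
      rw [← p.take_spec hw, SimpleGraph.Walk.support_append, List.nodup_append] at hnd
      rw [(p.dropUntil w hw).support_eq_cons] at hvmem
      rcases List.mem_cons.mp hvmem with h1 | h1
      · exact h.ne h1
      · exact hnd.2.2 v ((p.takeUntil w hw).start_mem_support) v h1 rfl
    refine ⟨(p.dropUntil w hw).toDeleteEdges {s(v, w)} ?_⟩
    intro e he hes
    rw [Set.mem_singleton_iff] at hes
    subst hes
    exact hv ((p.dropUntil w hw).fst_mem_support_of_mem_edges he)
  · left
    refine ⟨p.toDeleteEdges {s(v, w)} ?_⟩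
    intro e he hes
    rw [Set.mem_singleton_iff] at hes
    subst hes
    exact hw (p.snd_mem_support_of_mem_edges he)

private lemma cond_iff (hconn : T.Connected) (hacyc : T.IsAcyclic)
    (heven : Even (Fintype.card V)) {v w : V} (h : T.Adj v w) :
    (∀ c : (T.deleteEdges {s(v, w)}).ConnectedComponent,
        Odd (Nat.card {x : V // (T.deleteEdges {s(v, w)}).connectedComponentMk x = c})) ↔
      Odd (Finset.univ.filter
        (fun x => (T.deleteEdges {s(v, w)}).Reachable w x)).card := by
  set G := T.deleteEdges {s(v, w)} with hG
  have fib : ∀ u : V, Nat.card {x : V // G.connectedComponentMk x = G.connectedComponentMk u}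
      = (Finset.univ.filter (fun x => G.Reachable u x)).card := by
    intro u
    rw [Nat.card_eq_fintype_card, Fintype.card_subtype]
    congr 1
    ext x
    simp only [Finset.mem_filter, Finset.mem_univ, true_and,
      SimpleGraph.ConnectedComponent.eq]
    exact ⟨SimpleGraph.Reachable.symm, SimpleGraph.Reachable.symm⟩
  set A := Finset.univ.filter (fun x => G.Reachable v x) with hA
  set B := Finset.univ.filter (fun x => G.Reachable w x) with hB
  have hdisj : Disjoint A B := by
    rw [Finset.disjoint_left]
    intro x hxA hxB
    rw [hA, Finset.mem_filter] at hxA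
    rw [hB, Finset.mem_filter] at hxB
    exact not_reach_del hacyc h (hxA.2.trans hxB.2.symm)
  have hunion : A ∪ B = Finset.univ := by
    ext x
    simp only [Finset.mem_union, hA, hB, Finset.mem_filter, Finset.mem_univ, true_and,
      iff_true]
    exact reach_cover hconn hacyc h x
  have hsum : A.card + B.card = Fintype.card V := by
    rw [← Finset.card_union_of_disjoint hdisj, hunion, Finset.card_univ]
  have hparity : Odd A.card ↔ Odd B.card := by
    rw [← hsum] at heven
    rw [← Nat.not_even_iff_odd, ← Nat.not_even_iff_odd]
    exact not_congr (Nat.even_add.mp heven)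
  constructor
  · intro hc
    have := hc (G.connectedComponentMk w)
    rwa [fib w] at this
  · intro hodd c
    induction c using SimpleGraph.ConnectedComponent.ind with
    | _ u =>
      rcases reach_cover hconn hacyc h u with hu | hu
      · have : G.connectedComponentMk u = G.connectedComponentMk v :=
          SimpleGraph.ConnectedComponent.eq.mpr hu.symm
        rw [this, fib v]
        exact hparity.mpr hodd
      · have : G.connectedComponentMk u = G.connectedComponentMk w :=
          SimpleGraph.ConnectedComponent.eq.mpr hu.symm
        rw [this, fib w]
        exact hodd

private lemma sum_comp (hconn : T.Connected) (hacyc : T.IsAcyclic) (v : V) :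
    ∑ w ∈ T.neighborFinset v,
      (Finset.univ.filter (fun x => (T.deleteEdges {s(v, w)}).Reachable w x)).card
      = Fintype.card V - 1 := by
  have hdisj : ∀ w ∈ T.neighborFinset v, ∀ w' ∈ T.neighborFinset v, w ≠ w' →
      Disjoint (Finset.univ.filter (fun x => (T.deleteEdges {s(v, w)}).Reachable w x))
        (Finset.univ.filter (fun x => (T.deleteEdges {s(v, w')}).Reachable w' x)) := by
    intro w hw w' hw' hne
    rw [SimpleGraph.mem_neighborFinset] at hw hw'
    rw [Finset.disjoint_left]
    intro x hx hx'
    rw [Finset.mem_filter] at hx hx'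
    exact hne (nbr_unique hacyc hw hw' hx.2 hx'.2)
  rw [← Finset.card_biUnion hdisj]
  have : (T.neighborFinset v).biUnion
      (fun w => Finset.univ.filter (fun x => (T.deleteEdges {s(v, w)}).Reachable w x))
      = Finset.univ.erase v := by
    ext x
    simp only [Finset.mem_biUnion, Finset.mem_filter, Finset.mem_univ, true_and,
      Finset.mem_erase, and_true, SimpleGraph.mem_neighborFinset]
    constructor
    · rintro ⟨w, hw, hr⟩
      intro hxv
      subst hxv
      exact not_reach_del hacyc hw hr.symm
    · intro hx
      exact exists_nbr hconn hacyc hx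
  rw [this, Finset.card_erase_of_mem (Finset.mem_univ v), Finset.card_univ]

end TreeAux

theorem stmt2 {V : Type} [Fintype V] (T : SimpleGraph V)
    (hconn : T.Connected) (hacyc : T.IsAcyclic) (heven : Even (Nat.card V)) (v : V) :
    Odd (Nat.card {e : Sym2 V // e ∈ T.edgeSet ∧ v ∈ e ∧
      ∀ c : (T.deleteEdges {e}).ConnectedComponent,
        Odd (Nat.card {x : V // (T.deleteEdges {e}).connectedComponentMk x = c})}) := by
  classical
  rw [Nat.card_eq_fintype_card] at heven
  rw [Nat.card_eq_fintype_card, Fintype.card_subtype]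
  have key : (Finset.univ.filter (fun e : Sym2 V => e ∈ T.edgeSet ∧ v ∈ e ∧
      ∀ c : (T.deleteEdges {e}).ConnectedComponent,
        Odd (Nat.card {x : V // (T.deleteEdges {e}).connectedComponentMk x = c}))).card
      = ((T.neighborFinset v).filter (fun w => Odd ((Finset.univ.filter
          (fun x => (T.deleteEdges {s(v, w)}).Reachable w x)).card))).card := by
    symm
    apply Finset.card_bij (fun w _ => s(v, w))
    · intro w hw
      rw [Finset.mem_filter, SimpleGraph.mem_neighborFinset] at hw
      rw [Finset.mem_filter]
      exact ⟨Finset.mem_univ _, T.mem_edgeSet.mpr hw.1, Sym2.mem_mk_left _ _,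
        (cond_iff hconn hacyc heven hw.1).mpr hw.2⟩
    · intro w hw w' hw' heq
      exact Sym2.congr_right.mp heq
    · intro e he
      rw [Finset.mem_filter] at he
      obtain ⟨-, hedge, hv, hcond⟩ := he
      refine ⟨Sym2.Mem.other hv, ?_, Sym2.other_spec hv⟩
      have hspec := Sym2.other_spec hv
      have hadj : T.Adj v (Sym2.Mem.other hv) := by
        rw [← T.mem_edgeSet, hspec]; exact hedge
      rw [Finset.mem_filter, SimpleGraph.mem_neighborFinset]
      refine ⟨hadj, (cond_iff hconn hacyc heven hadj).mp ?_⟩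
      rw [hspec]
      exact hcond
  rw [key, ← Finset.odd_sum_iff_odd_card_odd, sum_comp hconn hacyc v]
  exact Nat.Even.sub_odd (Fintype.card_pos_iff.mpr ⟨v⟩) heven odd_one
end

section
/- A finite multigraph G can be decomposed into an even subgraph and an odd subgraph if and only if every connected component of the subgraph of G induced by the set of odd-degree vertices of G has an even number of vertices. -/
open Finset
open scoped Classical

open Multigraph

set_option linter.unusedSectionVars false
section Aux
variable {V E : Type} [Fintype V] [Fintype E]

lemma czero (n : ℕ) : ((n : ZMod 2) = 0) ↔ Even n := by
  rw [even_iff_two_dvd, ZMod.natCast_eq_zero_iff]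

lemma cone (n : ℕ) : ((n : ZMod 2) = 1) ↔ Odd n := by
  rw [Nat.not_even_iff_odd.symm, ← czero]
  constructor
  · intro h h0; rw [h0] at h; exact one_ne_zero h.symm
  · intro h; have h2 : (n : ZMod 2) = 0 ∨ (n : ZMod 2) = 1 := by
      generalize (n : ZMod 2) = x; revert x; decide
    tauto

/-- boundary map -/
noncomputable def bnd (G : Multigraph V E) (f : E → ZMod 2) (v : V) : ZMod 2 :=
  ∑ e, f e * (if v ∈ G.ends e then 1 else 0)

lemma degIn_cast (G : Multigraph V E) (F : Finset E) (v : V) :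
    ((G.degIn F v : ℕ) : ZMod 2) = bnd G (fun e => if e ∈ F then 1 else 0) v := by
  rw [Multigraph.degIn, Finset.card_filter, bnd]
  push_cast
  simp only [ite_mul, one_mul, zero_mul, Finset.sum_ite_mem, Finset.univ_inter]

lemma bnd_sum (G : Multigraph V E) {ι : Type*} (s : Finset ι) (f : ι → E → ZMod 2) (v : V) :
    bnd G (∑ i ∈ s, f i) v = ∑ i ∈ s, bnd G (f i) v := by
  unfold bnd
  rw [Finset.sum_comm]
  congr 1; ext e
  simp [Finset.sum_mul]

lemma exists_rep_ne (G : Multigraph V E) (e : E) : ∃ a b : V, G.ends e = s(a, b) ∧ a ≠ b := by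
  obtain ⟨⟨a, b⟩, h⟩ := Quot.exists_rep (G.ends e)
  refine ⟨a, b, h.symm, fun hab => G.no_loops e ?_⟩
  rw [← h, hab]; exact Sym2.mk_isDiag_iff.mpr rfl

end Aux

section Main
set_option linter.unusedSectionVars false
variable {V E : Type} [Fintype V] [Fintype E] (G : Multigraph V E) (S : Set V)

def relG (a b : V) : Prop := a ∈ S ∧ b ∈ S ∧ (G.simple).Adj a b

lemma rel_symm : Symmetric (relG G S) :=
  fun _ _ ⟨h1, h2, h3⟩ => ⟨h2, h1, h3.symm⟩

lemma mem_S_of_chain {a b : V} (h : Relation.ReflTransGen (relG G S) a b) (ha : a ∈ S) : b ∈ S := by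
  induction h with
  | refl => exact ha
  | tail _ h2 _ => exact h2.2.1

lemma exists_path_fun {a b : V} (h : Relation.ReflTransGen (relG G S) a b) :
    ∃ f : E → ZMod 2,
      (∀ v, bnd G f v = (if v = a then 1 else 0) + (if v = b then 1 else 0)) ∧
      (∀ e, f e ≠ 0 → ∀ x ∈ G.ends e, x ∈ S) := by
  induction h with
  | refl =>
    refine ⟨0, fun v => ?_, fun e he => absurd rfl he⟩
    simp only [bnd, Pi.zero_apply, zero_mul, Finset.sum_const_zero]
    by_cases hv : v = a <;> simp [hv]
    decide
  | @tail x c _ h2 ih =>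
    obtain ⟨f, hf1, hf2⟩ := ih
    obtain ⟨hxS, hcS, hne, e, he⟩ : x ∈ S ∧ c ∈ S ∧ x ≠ c ∧ ∃ e : E, G.ends e = s(x, c) := h2
    refine ⟨f + fun e' => if e' = e then 1 else 0, fun v => ?_, fun e' h' x' hx' => ?_⟩
    · have hδ : bnd G (fun e' => if e' = e then 1 else 0) v = if v ∈ G.ends e then 1 else 0 := by
        rw [bnd, Finset.sum_eq_single e]
        · simp
        · intro b _ hb; simp [hb]
        · intro hb; exact absurd (Finset.mem_univ e) hb
      have hb : bnd G (f + fun e' => if e' = e then 1 else 0) v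
          = bnd G f v + bnd G (fun e' => if e' = e then 1 else 0) v := by
        rw [bnd, bnd, bnd, ← Finset.sum_add_distrib]
        congr 1; ext e'; by_cases h : v ∈ G.ends e' <;> simp [h]
      rw [hb, hδ, hf1, he]
      simp only [Sym2.mem_iff]
      have key : (if v = x ∨ v = c then (1:ZMod 2) else 0)
          = (if v = x then 1 else 0) + (if v = c then 1 else 0) := by
        by_cases h2 : v = x <;> by_cases h3 : v = c
        · exact absurd (h2.symm.trans h3) hne
        all_goals simp [h2, h3, hne, Ne.symm hne]
      rw [key]
      have hXX : (if v = x then (1:ZMod 2) else 0) + (if v = x then 1 else 0) = 0 := by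
        by_cases h2 : v = x <;> simp [h2]
        decide
      linear_combination hXX
    · by_cases h'' : e' = e
      · subst h''
        rw [he, Sym2.mem_iff] at hx'
        rcases hx' with rfl | rfl
        · exact hxS
        · exact hcS
      · refine hf2 e' ?_ x' hx'
        simpa [h''] using h'

end Main

theorem stmt4 {V E : Type} [Fintype V] [Fintype E] (G : Multigraph V E) :
    (∃ F : Finset E, G.IsEvenSet F ∧ G.IsOddSet Fᶜ) ↔
    ∀ C : Finset V, G.IsComponentOf {v : V | Odd (G.deg v)} C → Even C.card := by
  classical
  set S : Set V := {v : V | Odd (G.deg v)} with hSdef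
  have hsplit : ∀ (F : Finset E) (v : V), G.deg v = G.degIn F v + G.degIn Fᶜ v := by
    intro F v
    rw [Multigraph.deg, Multigraph.degIn, Multigraph.degIn, Multigraph.degIn,
      ← Finset.card_union_of_disjoint
        (Finset.disjoint_filter_filter disjoint_compl_right),
      ← Finset.filter_union, Finset.union_compl]
  constructor
  · rintro ⟨F, hEven, hOdd⟩ C ⟨v₀, hv₀S, hC⟩
    have hoddc : ∀ v : V, Odd (G.deg v) → Odd (G.degIn Fᶜ v) := by
      intro v hv
      have h1 := hEven v
      have h2 := hsplit F v
      rw [Nat.odd_iff] at hv ⊢; rw [Nat.even_iff] at h1; omega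
    have hendS : ∀ e ∈ Fᶜ, ∀ x ∈ G.ends e, x ∈ S := by
      intro e he x hx
      have h0 := hOdd x ⟨e, he, hx⟩
      have h1 := hEven x
      have h2 := hsplit F x
      show Odd (G.deg x)
      rw [Nat.odd_iff] at h0 ⊢; rw [Nat.even_iff] at h1; omega
    have hclosed : ∀ e ∈ Fᶜ, ∀ x y : V, G.ends e = s(x, y) → x ∈ C → y ∈ C := by
      intro e he x y hxy hxC
      have hxS : x ∈ S := hendS e he x (hxy ▸ Sym2.mem_mk_left x y)
      have hyS : y ∈ S := hendS e he y (hxy ▸ Sym2.mem_mk_right x y)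
      have hne : x ≠ y := fun h => G.no_loops e (hxy ▸ Sym2.mk_isDiag_iff.mpr h)
      exact (hC y).mpr (((hC x).mp hxC).tail ⟨hxS, hyS, (⟨hne, e, hxy⟩ : x ≠ y ∧ ∃ e : E, G.ends e = s(x, y))⟩)
    have h1 : ∑ v ∈ C, ((G.degIn Fᶜ v : ℕ) : ZMod 2) = (C.card : ZMod 2) := by
      rw [Finset.card_eq_sum_ones]; push_cast
      apply Finset.sum_congr rfl
      intro v hv
      have hvS : v ∈ S := mem_S_of_chain G S ((hC v).mp hv) hv₀S
      exact (cone _).mpr (hoddc v hvS)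
    have h2 : ∑ v ∈ C, G.degIn Fᶜ v = ∑ e ∈ Fᶜ, (C.filter (fun v => v ∈ G.ends e)).card := by
      simp only [Multigraph.degIn, Finset.card_filter]
      rw [Finset.sum_comm]
    have h3 : Even (∑ e ∈ Fᶜ, (C.filter (fun v => v ∈ G.ends e)).card) := by
      apply Finset.even_sum
      intro e he
      obtain ⟨a, b, hab, hne⟩ := exists_rep_ne G e
      by_cases haC : a ∈ C
      · have hbC : b ∈ C := hclosed e he a b hab haC
        have : C.filter (fun v => v ∈ G.ends e) = {a, b} := by
          ext v
          simp only [Finset.mem_filter, hab, Sym2.mem_iff, Finset.mem_insert,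
            Finset.mem_singleton]
          constructor
          · exact fun h => h.2
          · rintro (rfl | rfl)
            · exact ⟨haC, Or.inl rfl⟩
            · exact ⟨hbC, Or.inr rfl⟩
        rw [this, Finset.card_pair hne]
        exact even_two
      · have hbC : b ∉ C := fun hb =>
          haC (hclosed e he b a (by rw [hab, Sym2.eq_swap]) hb)
        have : C.filter (fun v => v ∈ G.ends e) = ∅ := by
          ext v
          simp only [Finset.mem_filter, hab, Sym2.mem_iff, Finset.notMem_empty, iff_false]
          rintro ⟨hvC, rfl | rfl⟩
          · exact haC hvC
          · exact hbC hvC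
        rw [this, Finset.card_empty]
        exact Even.zero
    rw [← czero, ← h1]
    have : ((∑ v ∈ C, G.degIn Fᶜ v : ℕ) : ZMod 2) = 0 := by
      rw [h2, czero]; exact h3
    rw [← this]; push_cast; rfl
  · intro hcomp
    have hsymm : Symmetric (Relation.ReflTransGen (relG G S)) :=
      by haveI : Std.Symm (relG G S) := ⟨fun a b h => rel_symm G S h⟩; exact fun _ _ h => Std.Symm.symm _ _ h
    let st : Setoid V := ⟨Relation.ReflTransGen (relG G S),
      ⟨fun _ => Relation.ReflTransGen.refl, fun h => hsymm h, fun h h' => h.trans h'⟩⟩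
    let rep : V → V := fun u => (Quotient.mk st u).out
    have hrep : ∀ u : V, Relation.ReflTransGen (relG G S) (rep u) u :=
      fun u => Quotient.mk_out (s := st) u
    have hrepeq : ∀ u w : V, Relation.ReflTransGen (relG G S) u w → rep u = rep w := by
      intro u w h
      show (Quotient.mk st u).out = (Quotient.mk st w).out
      rw [Quotient.sound (a := u) (b := w) h]
    have hrepidem : ∀ u : V, rep (rep u) = rep u := fun u => hrepeq (rep u) u (hrep u)
    let fu : V → E → ZMod 2 := fun u => Classical.choose (exists_path_fun G S (hrep u))
    have hfu : ∀ u : V, (∀ v, bnd G (fu u) v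
          = (if v = rep u then 1 else 0) + (if v = u then 1 else 0))
        ∧ (∀ e, fu u e ≠ 0 → ∀ x ∈ G.ends e, x ∈ S) :=
      fun u => Classical.choose_spec (exists_path_fun G S (hrep u))
    let Ftot : E → ZMod 2 := ∑ u ∈ G.oddVerts, fu u
    have hbnd : ∀ v : V, bnd G Ftot v = if v ∈ G.oddVerts then 1 else 0 := by
      intro v
      rw [bnd_sum]
      have : ∀ u ∈ G.oddVerts, bnd G (fu u) v
          = (if v = rep u then 1 else 0) + (if v = u then 1 else 0) :=
        fun u _ => (hfu u).1 v
      rw [Finset.sum_congr rfl this, Finset.sum_add_distrib]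
      have hsum2 : ∑ u ∈ G.oddVerts, (if v = u then (1 : ZMod 2) else 0)
          = if v ∈ G.oddVerts then 1 else 0 := Finset.sum_ite_eq G.oddVerts v fun _ => 1
      have hsum1 : ∑ u ∈ G.oddVerts, (if v = rep u then (1 : ZMod 2) else 0) = 0 := by
        rw [Finset.sum_boole]
        by_cases hex : ∃ u₀ ∈ G.oddVerts, v = rep u₀
        · obtain ⟨u₀, hu₀, hvrep⟩ := hex
          have hu₀S : u₀ ∈ S := (Finset.mem_filter.mp hu₀).2
          have hvu₀ : Relation.ReflTransGen (relG G S) v u₀ := hvrep ▸ hrep u₀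
          have hvS : v ∈ S := mem_S_of_chain G S (hsymm hvu₀) hu₀S
          have hrepv : rep v = v := by
            rw [hvrep]; exact hrepidem u₀
          have hfe : G.oddVerts.filter (fun u => v = rep u)
              = Finset.univ.filter (fun u => Relation.ReflTransGen (relG G S) v u) := by
            ext u
            simp only [Finset.mem_filter, Finset.mem_univ, true_and, Multigraph.oddVerts]
            constructor
            · rintro ⟨_, hvr⟩
              exact hvr ▸ hrep u
            · intro hvu
              refine ⟨mem_S_of_chain G S hvu hvS, ?_⟩
              rw [← hrepeq v u hvu, hrepv]
          rw [hfe]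
          have hcv : G.IsComponentOf S (Finset.univ.filter
              (fun u => Relation.ReflTransGen (relG G S) v u)) :=
            ⟨v, hvS, fun x => by simp only [Finset.mem_filter, Finset.mem_univ, true_and]; exact Iff.rfl⟩
          rw [czero]
          exact hcomp _ hcv
        · have hfe : G.oddVerts.filter (fun u => v = rep u) = ∅ := by
            ext u
            simp only [Finset.mem_filter, Finset.notMem_empty, iff_false]
            rintro ⟨h1, h2⟩
            exact hex ⟨u, h1, h2⟩
          rw [hfe, Finset.card_empty]
          rfl
      rw [hsum1, hsum2, zero_add]
    let F₂ : Finset E := Finset.univ.filter (fun e => Ftot e = 1)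
    have hind : (fun e => if e ∈ F₂ then (1 : ZMod 2) else 0) = Ftot := by
      funext e
      by_cases h : Ftot e = 1
      · simp [F₂, h]
      · have h0 : Ftot e = 0 := by
          have : Ftot e = 0 ∨ Ftot e = 1 := by
            generalize Ftot e = x; revert x; decide
          tauto
        simp [F₂, h, h0]
    have hdeg2 : ∀ v : V, ((G.degIn F₂ v : ℕ) : ZMod 2) = if v ∈ G.oddVerts then 1 else 0 :=
      fun v => by rw [degIn_cast, hind, hbnd]
    have hsupp : ∀ e ∈ F₂, ∀ x ∈ G.ends e, x ∈ S := by
      intro e he x hx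
      have h1 : Ftot e ≠ 0 := by
        have := (Finset.mem_filter.mp he).2
        rw [this]; exact one_ne_zero
      have h2 : ∃ u ∈ G.oddVerts, fu u e ≠ 0 := by
        by_contra hcon
        push_neg at hcon
        apply h1
        show (∑ u ∈ G.oddVerts, fu u) e = 0
        rw [Finset.sum_apply]
        exact Finset.sum_eq_zero hcon
      obtain ⟨u, _, hu⟩ := h2
      exact (hfu u).2 e hu x hx
    refine ⟨F₂ᶜ, ?_, ?_⟩
    · intro v
      rw [← czero]
      have h2 := hsplit F₂ᶜ v
      rw [compl_compl] at h2
      have h3 : ((G.deg v : ℕ) : ZMod 2)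
          = ((G.degIn F₂ᶜ v : ℕ) : ZMod 2) + ((G.degIn F₂ v : ℕ) : ZMod 2) := by
        rw [h2, Nat.cast_add]
      by_cases hv : v ∈ G.oddVerts
      · have hvo : Odd (G.deg v) := (Finset.mem_filter.mp hv).2
        have hd : ((G.deg v : ℕ) : ZMod 2) = 1 := (cone _).mpr hvo
        have hd2 := hdeg2 v
        rw [if_pos hv] at hd2
        have := h3
        rw [hd, hd2] at this
        have h4 : ((G.degIn F₂ᶜ v : ℕ) : ZMod 2) + 1 = 0 + 1 := by
          rw [zero_add]; exact this.symm
        exact add_right_cancel h4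
      · have hvo : Even (G.deg v) := Nat.not_odd_iff_even.mp
          (fun h => hv (Finset.mem_filter.mpr ⟨Finset.mem_univ v, h⟩))
        have hd : ((G.deg v : ℕ) : ZMod 2) = 0 := (czero _).mpr hvo
        have hd2 := hdeg2 v
        rw [if_neg hv] at hd2
        have := h3
        rw [hd, hd2] at this
        simpa using this.symm
    · rw [compl_compl]
      rintro v ⟨e, heF₂, hv⟩
      have hvS : v ∈ S := hsupp e heF₂ v hv
      have hvodd : v ∈ G.oddVerts := Finset.mem_filter.mpr ⟨Finset.mem_univ v, hvS⟩
      have hd2 := hdeg2 v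
      rw [if_pos hvodd] at hd2
      exact (cone _).mp hd2
end

section
/- Every finite forest can be decomposed into two odd subgraphs. -/
open Finset
open scoped Classical

open Multigraph

set_option linter.unusedSectionVars false
set_option maxHeartbeats 1000000

namespace OddDecomp
variable {V : Type} [Fintype V]

noncomputable def dIn (A : Finset (Sym2 V)) (v : V) : ℕ := (A.filter (fun e => v ∈ e)).card
def OZ (n : ℕ) : Prop := Odd n ∨ n = 0

lemma sym2_eq {u w : V} {e : Sym2 V} (hne : u ≠ w) (hu : u ∈ e) (hw : w ∈ e) :
    e = s(u, w) := by
  induction e using Sym2.ind with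
  | _ x y =>
    rw [Sym2.mem_iff] at hu hw
    rcases hu with rfl | rfl <;> rcases hw with rfl | rfl
    · exact absurd rfl hne
    · rfl
    · exact Sym2.eq_swap
    · exact absurd rfl hne

lemma dIn_union {B C : Finset (Sym2 V)} (h : Disjoint B C) (v : V) :
    dIn (B ∪ C) v = dIn B v + dIn C v := by
  unfold dIn
  rw [Finset.filter_union]
  exact Finset.card_union_of_disjoint (Finset.disjoint_filter_filter h)

lemma dIn_mono {B C : Finset (Sym2 V)} (h : B ⊆ C) (v : V) : dIn B v ≤ dIn C v :=
  Finset.card_le_card (Finset.filter_subset_filter _ h)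

lemma dIn_eq_zero {B : Finset (Sym2 V)} {v : V} (h : ∀ e ∈ B, v ∉ e) : dIn B v = 0 := by
  unfold dIn
  rw [Finset.card_eq_zero, Finset.filter_eq_empty_iff]
  exact h

def Sep (A : Finset (Sym2 V)) (M : Finset V) : Prop :=
  ∀ a ∈ M, ∀ b ∈ M, a ≠ b →
    ¬ (SimpleGraph.fromEdgeSet (↑A : Set (Sym2 V))).Reachable a b

def Concl (A : Finset (Sym2 V)) (U1 U2 : Finset V) : Prop :=
  ∃ E1 E2 : Finset (Sym2 V), E1 ∪ E2 = A ∧ Disjoint E1 E2 ∧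
    (∀ v : V, v ∉ U1 → v ∉ U2 → OZ (dIn E1 v) ∧ OZ (dIn E2 v)) ∧
    (∀ v ∈ U1, Even (dIn E1 v) ∧ OZ (dIn E2 v)) ∧
    (∀ v ∈ U2, Even (dIn E2 v) ∧ OZ (dIn E1 v))

lemma core (A : Finset (Sym2 V)) (U1 U2 : Finset V)
    (hd : ∀ e ∈ A, ¬e.IsDiag)
    (hac : (SimpleGraph.fromEdgeSet (↑A : Set (Sym2 V))).IsAcyclic)
    (hdisj : Disjoint U1 U2)
    (hsep : Sep A (U1 ∪ U2))
    (IH : ∀ B, B ⊂ A → ∀ W1 W2 : Finset V, (∀ e ∈ B, ¬e.IsDiag) →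
      (SimpleGraph.fromEdgeSet (↑B : Set (Sym2 V))).IsAcyclic →
      Disjoint W1 W2 → Sep B (W1 ∪ W2) → Concl B W1 W2)
    (u : V) (hu : u ∈ U1) (hdu : dIn A u ≠ 0) : Concl A U1 U2 := by
  classical
  set G := SimpleGraph.fromEdgeSet (↑A : Set (Sym2 V)) with hG
  have hGadj : ∀ x y : V, G.Adj x y ↔ s(x, y) ∈ A ∧ x ≠ y := by
    intro x y
    rw [hG, SimpleGraph.fromEdgeSet_adj, Finset.mem_coe]
  set S := A.filter (fun e => u ∈ e) with hSdef
  set A' := A \ S with hA'def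
  set N := Finset.univ.filter (fun w => w ≠ u ∧ s(u, w) ∈ A) with hNdef
  set k := S.card with hkdef
  have hSA : S ⊆ A := Finset.filter_subset _ _
  have hk : k ≠ 0 := hdu
  have hSne : S.Nonempty := Finset.card_pos.mp (Nat.pos_of_ne_zero hk)
  have hssub : A' ⊂ A := Finset.sdiff_ssubset hSA hSne
  have hmemA' : ∀ e, e ∈ A' ↔ e ∈ A ∧ u ∉ e := by
    intro e
    rw [hA'def, Finset.mem_sdiff, hSdef, Finset.mem_filter]
    tauto
  have hd' : ∀ e ∈ A', ¬e.IsDiag := fun e he => hd e ((hmemA' e).mp he).1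
  have hle : SimpleGraph.fromEdgeSet (↑A' : Set (Sym2 V)) ≤ G :=
    SimpleGraph.fromEdgeSet_mono (Finset.coe_subset.mpr Finset.sdiff_subset)
  have hac' : (SimpleGraph.fromEdgeSet (↑A' : Set (Sym2 V))).IsAcyclic :=
    fun v c hc => hac (c.mapLe hle) ((SimpleGraph.Walk.mapLe_isCycle hle).mpr hc)
  have hNmem : ∀ w, w ∈ N ↔ w ≠ u ∧ s(u, w) ∈ A := by
    intro w
    rw [hNdef, Finset.mem_filter]
    simp
  have hNadj : ∀ w ∈ N, G.Adj u w := by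
    intro w hw
    obtain ⟨hwu, hwA⟩ := (hNmem w).mp hw
    exact (hGadj u w).mpr ⟨hwA, Ne.symm hwu⟩
  have hNnotU : ∀ w ∈ N, w ∉ U1 ∪ U2 := by
    intro w hw hwU
    exact hsep u (Finset.mem_union_left _ hu) w hwU (Ne.symm ((hNmem w).mp hw).1)
      ((hNadj w hw).reachable)
  have hA'uz : dIn A' u = 0 := dIn_eq_zero (fun e he => ((hmemA' e).mp he).2)
  have hSu : dIn S u = k := by
    have : S.filter (fun e => u ∈ e) = S :=
      Finset.filter_eq_self.mpr (fun e he => (Finset.mem_filter.mp he).2)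
    unfold dIn
    rw [this]
  have hSN1 : ∀ w ∈ N, dIn S w = 1 := by
    intro w hw
    obtain ⟨hwu, hwA⟩ := (hNmem w).mp hw
    have hfil : S.filter (fun e => w ∈ e) = {s(u, w)} := by
      ext e
      simp only [Finset.mem_filter, Finset.mem_singleton, hSdef]
      constructor
      · rintro ⟨⟨heA, hue⟩, hwe⟩
        exact sym2_eq (Ne.symm hwu) hue hwe
      · rintro rfl
        exact ⟨⟨hwA, Sym2.mem_mk_left _ _⟩, Sym2.mem_mk_right _ _⟩
    unfold dIn
    rw [hfil]
    exact Finset.card_singleton _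
  have hS0 : ∀ v : V, v ≠ u → v ∉ N → dIn S v = 0 := by
    intro v hvu hvN
    apply dIn_eq_zero
    intro e he hv
    obtain ⟨heA, hue⟩ := Finset.mem_filter.mp he
    have : e = s(u, v) := sym2_eq (Ne.symm hvu) hue hv
    exact hvN ((hNmem v).mpr ⟨hvu, this ▸ heA⟩)
  set M' := U1.erase u ∪ U2 with hM'def
  have hM' : ∀ x ∈ M', x ∈ U1 ∪ U2 ∧ x ≠ u := by
    intro x hx
    rcases Finset.mem_union.mp hx with h | h
    · exact ⟨Finset.mem_union_left _ (Finset.mem_of_mem_erase h), Finset.ne_of_mem_erase h⟩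
    · exact ⟨Finset.mem_union_right _ h,
        fun hxu => absurd (hxu ▸ h) (Finset.disjoint_left.mp hdisj hu)⟩
  have hreachA : ∀ {x y : V}, (SimpleGraph.fromEdgeSet (↑A' : Set (Sym2 V))).Reachable x y →
      G.Reachable x y := fun h => h.mono hle
  have hsepA' : Sep A' (M' ∪ N) := by
    intro a ha b hb hne hr
    rcases Finset.mem_union.mp ha with haM | haN <;> rcases Finset.mem_union.mp hb with hbM | hbN
    · exact hsep a (hM' a haM).1 b (hM' b hbM).1 hne (hreachA hr)
    · exact hsep a (hM' a haM).1 u (Finset.mem_union_left _ hu) (hM' a haM).2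
        ((hreachA hr).trans ((hNadj b hbN).symm.reachable))
    · exact hsep u (Finset.mem_union_left _ hu) b (hM' b hbM).1 (Ne.symm (hM' b hbM).2)
        (((hNadj a haN).reachable).trans (hreachA hr))
    · have hbu : b ≠ u := ((hNmem b).mp hbN).1
      have hedge : s(u, b) ∈ G.edgeSet := by
        rw [hG, SimpleGraph.edgeSet_fromEdgeSet]
        refine ⟨Finset.mem_coe.mpr ((hNmem b).mp hbN).2, ?_⟩
        simp only [Sym2.mem_diagSet, Sym2.mk_isDiag_iff]
        exact Ne.symm hbu
      have hbridge := (SimpleGraph.isAcyclic_iff_forall_edge_isBridge.mp hac) hedge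
      rw [SimpleGraph.isBridge_iff] at hbridge
      apply hbridge
      have hle2 : SimpleGraph.fromEdgeSet (↑A' : Set (Sym2 V)) ≤
          G \ SimpleGraph.fromEdgeSet {s(u, b)} := by
        intro x y hxy
        rw [SimpleGraph.fromEdgeSet_adj, Finset.mem_coe] at hxy
        rw [SimpleGraph.sdiff_adj]
        constructor
        · exact (hGadj x y).mpr ⟨((hmemA' _).mp hxy.1).1, hxy.2⟩
        · rw [SimpleGraph.fromEdgeSet_adj]
          rintro ⟨hmem, -⟩
          rw [Set.mem_singleton_iff] at hmem
          exact ((hmemA' _).mp hxy.1).2 (hmem ▸ Sym2.mem_mk_left u b)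
      have hadj_ua : (G \ SimpleGraph.fromEdgeSet {s(u, b)}).Adj u a := by
        rw [SimpleGraph.sdiff_adj]
        refine ⟨hNadj a haN, ?_⟩
        rw [SimpleGraph.fromEdgeSet_adj]
        rintro ⟨hmem, -⟩
        rw [Set.mem_singleton_iff] at hmem
        exact hne (Sym2.congr_right.mp hmem)
      exact hadj_ua.reachable.trans (hr.mono hle2)
  rcases Nat.even_or_odd k with hk2 | hk2
  · -- star goes to E1, new marks get pending colour 1
    have hdisjW : Disjoint (U1.erase u ∪ N) U2 := by
      rw [Finset.disjoint_union_left]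
      refine ⟨hdisj.mono_left (Finset.erase_subset _ _), ?_⟩
      exact Finset.disjoint_left.mpr
        (fun w hw hw2 => hNnotU w hw (Finset.mem_union_right _ hw2))
    have hsubM : (U1.erase u ∪ N) ∪ U2 ⊆ M' ∪ N := by
      intro x hx
      rw [hM'def]
      simp only [Finset.mem_union] at hx ⊢
      tauto
    have hsepW : Sep A' ((U1.erase u ∪ N) ∪ U2) :=
      fun a ha b hb => hsepA' a (hsubM ha) b (hsubM hb)
    obtain ⟨E1', E2', hun, hdsj, hgood, hW1, hW2⟩ :=
      IH A' hssub _ _ hd' hac' hdisjW hsepW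
    have hE1A' : E1' ⊆ A' := hun ▸ Finset.subset_union_left
    have hE2A' : E2' ⊆ A' := hun ▸ Finset.subset_union_right
    have hDS1 : Disjoint E1' S := Finset.sdiff_disjoint.mono_left hE1A'
    have hDS2 : Disjoint E2' S := Finset.sdiff_disjoint.mono_left hE2A'
    have hd1 : ∀ v, dIn (E1' ∪ S) v = dIn E1' v + dIn S v := fun v => dIn_union hDS1 v
    have hzE1u : dIn E1' u = 0 := Nat.le_zero.mp (hA'uz ▸ dIn_mono hE1A' u)
    have hzE2u : dIn E2' u = 0 := Nat.le_zero.mp (hA'uz ▸ dIn_mono hE2A' u)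
    refine ⟨E1' ∪ S, E2', ?_, ?_, ?_, ?_, ?_⟩
    · rw [Finset.union_right_comm, hun]
      exact Finset.sdiff_union_of_subset hSA
    · rw [Finset.disjoint_union_left]
      exact ⟨hdsj, hDS2.symm⟩
    · intro v hv1 hv2
      have hvu : v ≠ u := fun h => hv1 (h ▸ hu)
      by_cases hvN : v ∈ N
      · have hW := hW1 v (Finset.mem_union_right _ hvN)
        rw [hd1 v, hSN1 v hvN]
        exact ⟨Or.inl hW.1.add_one, hW.2⟩
      · rw [hd1 v, hS0 v hvu hvN, Nat.add_zero]
        refine hgood v ?_ hv2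
        rw [Finset.mem_union]
        rintro (h | h)
        · exact hv1 (Finset.mem_of_mem_erase h)
        · exact hvN h
    · intro v hv
      by_cases hvu : v = u
      · subst hvu
        rw [hd1 v, hzE1u, hSu, Nat.zero_add]
        exact ⟨hk2, Or.inr hzE2u⟩
      · have hvN : v ∉ N := fun h => hNnotU v h (Finset.mem_union_left _ hv)
        have hW := hW1 v (Finset.mem_union_left _ (Finset.mem_erase.mpr ⟨hvu, hv⟩))
        rw [hd1 v, hS0 v hvu hvN, Nat.add_zero]
        exact hW
    · intro v hv
      have hvu : v ≠ u := fun h => Finset.disjoint_left.mp hdisj hu (h ▸ hv)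
      have hvN : v ∉ N := fun h => hNnotU v h (Finset.mem_union_right _ hv)
      have hW := hW2 v hv
      rw [hd1 v, hS0 v hvu hvN, Nat.add_zero]
      exact hW
  · -- k odd: star goes to E2, new marks get pending colour 2
    have hdisjW : Disjoint (U1.erase u) (U2 ∪ N) := by
      rw [Finset.disjoint_union_right]
      refine ⟨hdisj.mono_left (Finset.erase_subset _ _), ?_⟩
      exact Finset.disjoint_right.mpr
        (fun w hw hw2 => hNnotU w hw (Finset.mem_union_left _ (Finset.mem_of_mem_erase hw2)))
    have hsubM : U1.erase u ∪ (U2 ∪ N) ⊆ M' ∪ N := by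
      intro x hx
      rw [hM'def]
      simp only [Finset.mem_union] at hx ⊢
      tauto
    have hsepW : Sep A' (U1.erase u ∪ (U2 ∪ N)) :=
      fun a ha b hb => hsepA' a (hsubM ha) b (hsubM hb)
    obtain ⟨E1', E2', hun, hdsj, hgood, hW1, hW2⟩ :=
      IH A' hssub _ _ hd' hac' hdisjW hsepW
    have hE1A' : E1' ⊆ A' := hun ▸ Finset.subset_union_left
    have hE2A' : E2' ⊆ A' := hun ▸ Finset.subset_union_right
    have hDS1 : Disjoint E1' S := Finset.sdiff_disjoint.mono_left hE1A'
    have hDS2 : Disjoint E2' S := Finset.sdiff_disjoint.mono_left hE2A'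
    have hd2 : ∀ v, dIn (E2' ∪ S) v = dIn E2' v + dIn S v := fun v => dIn_union hDS2 v
    have hzE1u : dIn E1' u = 0 := Nat.le_zero.mp (hA'uz ▸ dIn_mono hE1A' u)
    have hzE2u : dIn E2' u = 0 := Nat.le_zero.mp (hA'uz ▸ dIn_mono hE2A' u)
    refine ⟨E1', E2' ∪ S, ?_, ?_, ?_, ?_, ?_⟩
    · rw [← Finset.union_assoc, hun]
      exact Finset.sdiff_union_of_subset hSA
    · rw [Finset.disjoint_union_right]
      exact ⟨hdsj, hDS1⟩
    · intro v hv1 hv2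
      have hvu : v ≠ u := fun h => hv1 (h ▸ hu)
      by_cases hvN : v ∈ N
      · have hW := hW2 v (Finset.mem_union_right _ hvN)
        rw [hd2 v, hSN1 v hvN]
        exact ⟨hW.2, Or.inl hW.1.add_one⟩
      · rw [hd2 v, hS0 v hvu hvN, Nat.add_zero]
        refine hgood v ?_ ?_
        · intro h
          exact hv1 (Finset.mem_of_mem_erase h)
        · rw [Finset.mem_union]
          rintro (h | h)
          · exact hv2 h
          · exact hvN h
    · intro v hv
      by_cases hvu : v = u
      · subst hvu
        rw [hd2 v, hzE2u, hSu, Nat.zero_add]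
        exact ⟨by rw [hzE1u]; exact Even.zero, Or.inl hk2⟩
      · have hvN : v ∉ N := fun h => hNnotU v h (Finset.mem_union_left _ hv)
        have hW := hW1 v (Finset.mem_erase.mpr ⟨hvu, hv⟩)
        rw [hd2 v, hS0 v hvu hvN, Nat.add_zero]
        exact hW
    · intro v hv
      have hvu : v ≠ u := fun h => Finset.disjoint_left.mp hdisj hu (h ▸ hv)
      have hvN : v ∉ N := fun h => hNnotU v h (Finset.mem_union_right _ hv)
      have hW := hW2 v (Finset.mem_union_left _ hv)
      rw [hd2 v, hS0 v hvu hvN, Nat.add_zero]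
      exact hW

lemma exists_leaf (A : Finset (Sym2 V)) (hd : ∀ e ∈ A, ¬e.IsDiag)
    (hac : (SimpleGraph.fromEdgeSet (↑A : Set (Sym2 V))).IsAcyclic) (hA : A.Nonempty) :
    ∃ u : V, dIn A u = 1 := by
  set G := SimpleGraph.fromEdgeSet (↑A : Set (Sym2 V)) with hG
  have hGadj : ∀ x y : V, G.Adj x y ↔ s(x, y) ∈ A ∧ x ≠ y := by
    intro x y
    rw [hG, SimpleGraph.fromEdgeSet_adj, Finset.mem_coe]
  obtain ⟨e₀, he₀⟩ := hA
  have hadj : ∃ a b : V, G.Adj a b := by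
    induction e₀ using Sym2.ind with
    | _ a b =>
      exact ⟨a, b, (hGadj a b).mpr ⟨he₀,
        fun hab => hd _ he₀ (Sym2.mk_isDiag_iff.mpr hab)⟩⟩
  obtain ⟨a, b, hab⟩ := hadj
  set P : ℕ → Prop := fun n => ∃ (x y : V) (p : G.Walk x y), p.IsPath ∧ p.length = n with hP
  have hP1 : P 1 := by
    refine ⟨a, b, SimpleGraph.Walk.cons hab SimpleGraph.Walk.nil, ?_, rfl⟩
    rw [SimpleGraph.Walk.cons_isPath_iff]
    simp [hab.ne]
  have hcard1 : 1 ≤ Fintype.card V := Fintype.card_pos_iff.mpr ⟨a⟩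
  set n₀ := Nat.findGreatest P (Fintype.card V) with hn₀def
  have hn₀ : 1 ≤ n₀ := Nat.le_findGreatest hcard1 hP1
  have hPn : P n₀ := Nat.findGreatest_spec hcard1 hP1
  obtain ⟨x, y, p, hp, hlen⟩ := hPn
  have hnil : ¬ p.Nil := by
    rw [SimpleGraph.Walk.not_nil_iff_lt_length, hlen]
    omega
  obtain ⟨s, hxs, q, rfl⟩ := SimpleGraph.Walk.not_nil_iff.mp hnil
  have hq : q.IsPath ∧ x ∉ q.support := (SimpleGraph.Walk.cons_isPath_iff _ _).mp hp
  have key : ∀ w, G.Adj x w → w = s := by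
    intro w hw
    by_contra hws
    by_cases hsup : w ∈ q.support
    · have hq' : (q.takeUntil w hsup).IsPath := hq.1.takeUntil hsup
      have hcyc : (SimpleGraph.Walk.cons hw.symm
          (SimpleGraph.Walk.cons hxs (q.takeUntil w hsup))).IsCycle := by
        rw [SimpleGraph.Walk.cons_isCycle_iff]
        constructor
        · rw [SimpleGraph.Walk.cons_isPath_iff]
          exact ⟨hq', fun hx => hq.2 (SimpleGraph.Walk.support_takeUntil_subset _ hsup hx)⟩
        · intro hmem
          rw [SimpleGraph.Walk.edges_cons, List.mem_cons] at hmem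
          rcases hmem with h1 | h2
          · rw [Sym2.eq_iff] at h1
            rcases h1 with ⟨rfl, _⟩ | ⟨h1a, h1b⟩
            · exact hw.ne rfl
            · exact hws h1a
          · have hx : x ∈ (q.takeUntil w hsup).support := by
              apply SimpleGraph.Walk.fst_mem_support_of_mem_edges
              rwa [Sym2.eq_swap] at h2
            exact hq.2 (SimpleGraph.Walk.support_takeUntil_subset _ hsup hx)
      exact hac _ hcyc
    · have hsup' : w ∉ (SimpleGraph.Walk.cons hxs q).support := by
        rw [SimpleGraph.Walk.support_cons]
        simp only [List.mem_cons, not_or]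
        exact ⟨fun h => hw.ne' h, hsup⟩
      have hp' : (SimpleGraph.Walk.cons hw.symm (SimpleGraph.Walk.cons hxs q)).IsPath := by
        rw [SimpleGraph.Walk.cons_isPath_iff]
        exact ⟨hp, hsup'⟩
      have hlt : (SimpleGraph.Walk.cons hw.symm (SimpleGraph.Walk.cons hxs q)).length
          < Fintype.card V := hp'.length_lt
      have hlen' : (SimpleGraph.Walk.cons hw.symm (SimpleGraph.Walk.cons hxs q)).length
          = n₀ + 1 := by
        rw [SimpleGraph.Walk.length_cons, hlen]
      refine Nat.findGreatest_is_greatest (lt_add_one n₀) ?_ ⟨w, y, _, hp', hlen'⟩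
      omega
  refine ⟨x, ?_⟩
  have hfilter : A.filter (fun e => x ∈ e) = {s(x, s)} := by
    ext e
    simp only [Finset.mem_filter, Finset.mem_singleton]
    constructor
    · rintro ⟨heA, hxe⟩
      obtain ⟨z, rfl⟩ := Sym2.mem_iff_exists.mp hxe
      have hxz : x ≠ z := fun h => hd _ heA (Sym2.mk_isDiag_iff.mpr h)
      rw [key z ((hGadj x z).mpr ⟨heA, hxz⟩)]
    · rintro rfl
      exact ⟨((hGadj x s).mp hxs).1, Sym2.mem_mk_left x s⟩
  unfold dIn
  rw [hfilter]
  exact Finset.card_singleton _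


lemma concl_swap {A : Finset (Sym2 V)} {U1 U2 : Finset V} (h : Concl A U1 U2) :
    Concl A U2 U1 := by
  obtain ⟨E1, E2, h1, h2, h3, h4, h5⟩ := h
  exact ⟨E2, E1, by rwa [Finset.union_comm], h2.symm,
    fun v hv1 hv2 => (h3 v hv2 hv1).symm, h5, h4⟩

lemma build : ∀ A : Finset (Sym2 V), (∀ e ∈ A, ¬e.IsDiag) →
    (SimpleGraph.fromEdgeSet (↑A : Set (Sym2 V))).IsAcyclic →
    ∀ U1 U2 : Finset V, Disjoint U1 U2 → Sep A (U1 ∪ U2) → Concl A U1 U2 := by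
  intro A
  induction A using Finset.strongInduction with
  | _ A IH =>
    intro hd hac U1 U2 hdisj hsep
    have IH' : ∀ B, B ⊂ A → ∀ W1 W2 : Finset V, (∀ e ∈ B, ¬e.IsDiag) →
        (SimpleGraph.fromEdgeSet (↑B : Set (Sym2 V))).IsAcyclic →
        Disjoint W1 W2 → Sep B (W1 ∪ W2) → Concl B W1 W2 :=
      fun B hB W1 W2 hd' hac' hdj hsp => IH B hB hd' hac' W1 W2 hdj hsp
    by_cases hex : ∃ u ∈ U1 ∪ U2, dIn A u ≠ 0
    · obtain ⟨u, huM, hdu⟩ := hex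
      rcases Finset.mem_union.mp huM with h1 | h2
      · exact core A U1 U2 hd hac hdisj hsep IH' u h1 hdu
      · exact concl_swap (core A U2 U1 hd hac hdisj.symm
          (by rwa [Finset.union_comm]) IH' u h2 hdu)
    · push_neg at hex
      by_cases hA : A = ∅
      · subst hA
        refine ⟨∅, ∅, by simp, Finset.disjoint_empty_left _, ?_, ?_, ?_⟩ <;>
          · intro v _
            first
            | exact fun _ => ⟨Or.inr rfl, Or.inr rfl⟩
            | exact ⟨Even.zero, Or.inr rfl⟩
      · obtain ⟨u₀, hu₀⟩ := exists_leaf A hd hac (Finset.nonempty_iff_ne_empty.mpr hA)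
        have hsep0 : Sep A ({u₀} ∪ (∅ : Finset V)) := by
          intro a ha b hb hne
          rw [Finset.union_empty, Finset.mem_singleton] at ha hb
          exact absurd (ha.trans hb.symm) hne
        have hcon := core A {u₀} ∅ hd hac (Finset.disjoint_empty_right _) hsep0 IH' u₀
          (Finset.mem_singleton_self _) (by rw [hu₀]; omega)
        obtain ⟨E1, E2, hun, hdsj, hg, h1, _⟩ := hcon
        have hE1A : E1 ⊆ A := hun ▸ Finset.subset_union_left
        have hE2A : E2 ⊆ A := hun ▸ Finset.subset_union_right
        have hz : dIn E1 u₀ = 0 := by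
          obtain ⟨r, hr⟩ := (h1 u₀ (Finset.mem_singleton_self _)).1
          have hle : dIn E1 u₀ ≤ 1 := hu₀ ▸ dIn_mono hE1A u₀
          omega
        have hall : ∀ v : V, OZ (dIn E1 v) ∧ OZ (dIn E2 v) := by
          intro v
          by_cases hv : v = u₀
          · subst hv
            exact ⟨Or.inr hz, (h1 v (Finset.mem_singleton_self _)).2⟩
          · exact hg v (by simp [hv]) (Finset.notMem_empty v)
        refine ⟨E1, E2, hun, hdsj, fun v _ _ => hall v, ?_, ?_⟩
        · intro v hv
          have h0 : dIn A v = 0 := hex v (Finset.mem_union_left _ hv)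
          have z1 : dIn E1 v = 0 := Nat.le_zero.mp (h0 ▸ dIn_mono hE1A v)
          have z2 : dIn E2 v = 0 := Nat.le_zero.mp (h0 ▸ dIn_mono hE2A v)
          exact ⟨by rw [z1]; exact Even.zero, Or.inr z2⟩
        · intro v hv
          have h0 : dIn A v = 0 := hex v (Finset.mem_union_right _ hv)
          have z1 : dIn E1 v = 0 := Nat.le_zero.mp (h0 ▸ dIn_mono hE1A v)
          have z2 : dIn E2 v = 0 := Nat.le_zero.mp (h0 ▸ dIn_mono hE2A v)
          exact ⟨by rw [z2]; exact Even.zero, Or.inr z1⟩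


end OddDecomp

theorem stmt17 {V : Type} [Fintype V] (F : SimpleGraph V) (hF : F.IsAcyclic) :
    ∃ E1 E2 : Finset (Sym2 V),
      (↑E1 ∪ ↑E2 : Set (Sym2 V)) = F.edgeSet ∧ Disjoint E1 E2 ∧
      (∀ v : V, (∃ e ∈ E1, v ∈ e) → Odd ((E1.filter (fun e => v ∈ e)).card)) ∧
      (∀ v : V, (∃ e ∈ E2, v ∈ e) → Odd ((E2.filter (fun e => v ∈ e)).card)) := by
  classical
  have hd : ∀ e ∈ F.edgeFinset, ¬e.IsDiag := fun e he =>
    SimpleGraph.not_isDiag_of_mem_edgeSet F (SimpleGraph.mem_edgeFinset.mp he)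
  have hac : (SimpleGraph.fromEdgeSet (↑F.edgeFinset : Set (Sym2 V))).IsAcyclic := by
    rw [SimpleGraph.coe_edgeFinset, SimpleGraph.fromEdgeSet_edgeSet]
    exact hF
  obtain ⟨E1, E2, hun, hdsj, hg, -, -⟩ := OddDecomp.build F.edgeFinset hd hac ∅ ∅
    (Finset.disjoint_empty_left _) (by intro a ha; simp at ha)
  refine ⟨E1, E2, ?_, hdsj, ?_, ?_⟩
  · rw [← Finset.coe_union, hun, SimpleGraph.coe_edgeFinset]
  · intro v hv
    rcases (hg v (Finset.notMem_empty v) (Finset.notMem_empty v)).1 with h | h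
    · exact h
    · exfalso
      obtain ⟨e, he, hve⟩ := hv
      have hmem : e ∈ E1.filter (fun e => v ∈ e) := Finset.mem_filter.mpr ⟨he, hve⟩
      unfold OddDecomp.dIn at h
      rw [Finset.card_eq_zero] at h
      rw [h] at hmem
      exact Finset.notMem_empty e hmem
  · intro v hv
    rcases (hg v (Finset.notMem_empty v) (Finset.notMem_empty v)).2 with h | h
    · exact h
    · exfalso
      obtain ⟨e, he, hve⟩ := hv
      have hmem : e ∈ E2.filter (fun e => v ∈ e) := Finset.mem_filter.mpr ⟨he, hve⟩
      unfold OddDecomp.dIn at h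
      rw [Finset.card_eq_zero] at h
      rw [h] at hmem
      exact Finset.notMem_empty e hmem
end
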